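/- arXiv:1512.08370 — 2 statements merged into one kernel-verified Lean document; each statement's English description precedes it below -/
import Mathlib

section
/- Consider Algorithm 1 applied to the convex program min{f(x) : g_k(x) ≤ 0 ∀k ∈ {1,…,m}, x ∈ 𝒳} with parameter α ≥ β²/2, where β is the Lipschitz modulus of g on 𝒳, and let x* ∈ 𝒳 be an optimal solution of the program. Then for all t ≥ 1, the running average x̄(t) = (1/t)∑_{τ=0}^{t−1} x(τ) satisfies f(x̄(t)) ≤ f(x*) + (α/t)‖x* − x(−1)‖². -/
open scoped RealInnerProductSpace

private lemma inner_eq_sum' {m : ℕ} (w v : EuclideanSpace ℝ (Fin m)) :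
    ⟪w, v⟫ = ∑ k, w k * v k := by
  simp [PiLp.inner_apply, RCLike.inner_apply, conj_trivial]
  exact Finset.sum_congr rfl (fun _ _ => mul_comm _ _)

private lemma norm_sq_eq_sum' {m : ℕ} (v : EuclideanSpace ℝ (Fin m)) :
    ‖v‖ ^ 2 = ∑ k, v k * v k := by
  rw [← real_inner_self_eq_norm_sq, inner_eq_sum']

private lemma combo_norm_sq {E : Type*} [NormedAddCommGroup E] [InnerProductSpace ℝ E]
    (a b : E) (l : ℝ) :
    ‖(1 - l) • a + l • b‖ ^ 2
      = (1 - l) * ‖a‖ ^ 2 + l * ‖b‖ ^ 2 - l * (1 - l) * ‖a - b‖ ^ 2 := by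
  have h1 : ∀ u : E, ‖u‖ ^ 2 = ⟪u, u⟫ := fun u => (real_inner_self_eq_norm_sq u).symm
  rw [h1, h1, h1, h1]
  simp only [inner_add_left, inner_add_right, inner_sub_left, inner_sub_right,
    real_inner_smul_left, real_inner_smul_right]
  rw [real_inner_comm b a]
  ring

private lemma convexOn_finset_sum' {E : Type*} [AddCommGroup E] [Module ℝ E]
    {X : Set E} (hX : Convex ℝ X) {ι : Type*} (s : Finset ι) (F : ι → E → ℝ)
    (hF : ∀ i ∈ s, ConvexOn ℝ X (F i)) :
    ConvexOn ℝ X (fun z => ∑ i ∈ s, F i z) := by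
  classical
  have h0 : ConvexOn ℝ X (0 : E → ℝ) := convexOn_const 0 hX
  have hs := Finset.sum_induction F (fun h => ConvexOn ℝ X h)
    (fun a b ha hb => ha.add hb) h0 hF
  have he : (fun z => ∑ i ∈ s, F i z) = ∑ i ∈ s, F i := by
    ext z; simp [Finset.sum_apply]
  rw [he]; exact hs

private lemma pushback {E : Type*} [NormedAddCommGroup E] [InnerProductSpace ℝ E]
    {X : Set E} (hX : Convex ℝ X) {h : E → ℝ} (hh : ConvexOn ℝ X h)
    {α : ℝ} (hα : 0 ≤ α) {c xm z : E} (hxm : xm ∈ X) (hz : z ∈ X)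
    (hmin : ∀ y ∈ X, h xm + α * ‖xm - c‖ ^ 2 ≤ h y + α * ‖y - c‖ ^ 2) :
    h xm + α * ‖xm - c‖ ^ 2 + α * ‖z - xm‖ ^ 2 ≤ h z + α * ‖z - c‖ ^ 2 := by
  have key : ∀ l : ℝ, 0 < l → l ≤ 1 →
      h xm + α * ‖xm - c‖ ^ 2 ≤ h z + α * ‖z - c‖ ^ 2 - (1 - l) * (α * ‖z - xm‖ ^ 2) := by
    intro l hl hl1
    set y := (1 - l) • xm + l • z with hy
    have hyX : y ∈ X := hX hxm hz (by linarith) hl.le (by ring)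
    have h1 : h y ≤ (1 - l) * h xm + l * h z := hh.2 hxm hz (by linarith) hl.le (by ring)
    have hyc : y - c = (1 - l) • (xm - c) + l • (z - c) := by
      rw [hy, smul_sub, smul_sub]
      module
    have h2 : ‖y - c‖ ^ 2
        = (1 - l) * ‖xm - c‖ ^ 2 + l * ‖z - c‖ ^ 2 - l * (1 - l) * ‖z - xm‖ ^ 2 := by
      rw [hyc, combo_norm_sq]
      rw [show xm - c - (z - c) = -(z - xm) by abel, norm_neg]
    have h2' : α * ‖y - c‖ ^ 2
        = (1 - l) * (α * ‖xm - c‖ ^ 2) + l * (α * ‖z - c‖ ^ 2)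
          - l * (1 - l) * (α * ‖z - xm‖ ^ 2) := by
      rw [h2]; ring
    have h3 := hmin y hyX
    have h4 : l * (h xm + α * ‖xm - c‖ ^ 2)
        ≤ l * (h z + α * ‖z - c‖ ^ 2 - (1 - l) * (α * ‖z - xm‖ ^ 2)) := by
      nlinarith [h1, h2', h3]
    exact le_of_mul_le_mul_left h4 hl
  set A := h xm + α * ‖xm - c‖ ^ 2 with hA
  set B := h z + α * ‖z - c‖ ^ 2 with hB
  set N := α * ‖z - xm‖ ^ 2 with hN
  have hN0 : 0 ≤ N := by positivity
  rcases eq_or_lt_of_le hN0 with hNe | hNp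
  · have := key 1 one_pos le_rfl
    rw [← hNe] at this ⊢
    linarith
  · by_contra hcon
    push_neg at hcon
    have hNne : N ≠ 0 := ne_of_gt hNp
    have hd : 0 < (A + N - B) / (2 * N) := div_pos (by linarith) (by linarith)
    set l := min 1 ((A + N - B) / (2 * N)) with hldef
    have hlp : 0 < l := lt_min one_pos hd
    have hl1 : l ≤ 1 := min_le_left _ _
    have hk := key l hlp hl1
    have hlN : l * N ≤ (A + N - B) / 2 := by
      have h5 : l ≤ (A + N - B) / (2 * N) := min_le_right _ _
      have h6 := mul_le_mul_of_nonneg_right h5 hN0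
      calc l * N ≤ (A + N - B) / (2 * N) * N := h6
        _ = (A + N - B) / 2 := by field_simp
    linarith

theorem alg1_objective_value_violation
    {n m : ℕ}
    (X : Set (EuclideanSpace ℝ (Fin n))) (hXconv : Convex ℝ X) (hXcl : IsClosed X)
    (f : EuclideanSpace ℝ (Fin n) → ℝ) (hf : ConvexOn ℝ X f) (hfc : ContinuousOn f X)
    (g : EuclideanSpace ℝ (Fin n) → EuclideanSpace ℝ (Fin m))
    (hg : ∀ k : Fin m, ConvexOn ℝ X (fun z => g z k))
    (β : ℝ) (hLip : ∀ u ∈ X, ∀ v ∈ X, ‖g u - g v‖ ≤ β * ‖u - v‖)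
    (α : ℝ) (hα : β ^ 2 / 2 ≤ α)
    (x : ℤ → EuclideanSpace ℝ (Fin n)) (hxm1 : x (-1) ∈ X)
    (Q : ℕ → EuclideanSpace ℝ (Fin m))
    (hQ0 : ∀ k : Fin m, Q 0 k = max 0 (-(g (x (-1)) k)))
    (hxmem : ∀ t : ℕ, x t ∈ X)
    (hmin : ∀ t : ℕ, ∀ z ∈ X,
      f (x t) + ⟪Q t + g (x ((t : ℤ) - 1)), g (x t)⟫ + α * ‖x t - x ((t : ℤ) - 1)‖ ^ 2 ≤
        f z + ⟪Q t + g (x ((t : ℤ) - 1)), g z⟫ + α * ‖z - x ((t : ℤ) - 1)‖ ^ 2)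
    (hQrec : ∀ (t : ℕ) (k : Fin m),
      Q (t + 1) k = max (-(g (x t) k)) (Q t k + g (x t) k))
    (xs : EuclideanSpace ℝ (Fin n)) (hxs : xs ∈ X)
    (hfeas : ∀ k : Fin m, g xs k ≤ 0)
    (hopt : ∀ z ∈ X, (∀ k : Fin m, g z k ≤ 0) → f xs ≤ f z)
    :
    ∀ t : ℕ, 1 ≤ t → f ((t : ℝ)⁻¹ • ∑ τ ∈ Finset.range t, x τ) ≤ f xs + (α / t) * ‖xs - x (-1)‖ ^ 2 := by
  classical
  intro t ht
  have hα0 : 0 ≤ α := le_trans (by positivity) hα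
  have hcast : ∀ s : ℕ, ((s + 1 : ℕ) : ℤ) - 1 = (s : ℤ) := by intro s; push_cast; ring
  have hcast0 : ((0 : ℕ) : ℤ) - 1 = (-1 : ℤ) := by norm_num
  have hmem' : ∀ τ : ℕ, x ((τ : ℤ) - 1) ∈ X := by
    intro τ
    cases τ with
    | zero => rw [hcast0]; exact hxm1
    | succ s => rw [hcast s]; exact hxmem s
  -- Q is componentwise nonnegative
  have hQnn : ∀ τ : ℕ, ∀ k, 0 ≤ Q τ k := by
    intro τ
    induction τ with
    | zero => intro k; rw [hQ0]; exact le_max_left _ _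
    | succ s ih =>
        intro k
        rw [hQrec]
        rcases le_total (g (x (s : ℤ)) k) 0 with h | h
        · exact le_trans (by linarith) (le_max_left _ _)
        · exact le_trans (by linarith [ih k]) (le_max_right _ _)
  -- Q t + g (x (t-1)) is componentwise nonnegative
  have hwnn : ∀ τ : ℕ, ∀ k, 0 ≤ Q τ k + g (x ((τ : ℤ) - 1)) k := by
    intro τ k
    cases τ with
    | zero =>
        rw [hcast0, hQ0]
        rcases le_total (g (x (-1)) k) 0 with h | h
        · have := le_max_right (0 : ℝ) (-(g (x (-1)) k)); linarith
        · have := le_max_left (0 : ℝ) (-(g (x (-1)) k)); linarith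
    | succ s =>
        rw [hcast s, hQrec]
        have := le_max_left (-(g (x (s : ℤ)) k)) (Q s k + g (x (s : ℤ)) k)
        linarith
  -- |g (x s)| ≤ Q (s+1) componentwise
  have hQge : ∀ s : ℕ, ∀ k, |g (x (s : ℤ)) k| ≤ Q (s + 1) k := by
    intro s k
    rw [hQrec]
    rcases le_total (g (x (s : ℤ)) k) 0 with h | h
    · rw [abs_of_nonpos h]; exact le_max_left _ _
    · rw [abs_of_nonneg h]
      exact le_trans (by linarith [hQnn s k]) (le_max_right _ _)
  -- drift bound
  have hdrift : ∀ s : ℕ,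
      ‖Q (s + 1)‖ ^ 2 ≤ ‖Q s + g (x (s : ℤ))‖ ^ 2 + ‖g (x (s : ℤ))‖ ^ 2 := by
    intro s
    rw [norm_sq_eq_sum', norm_sq_eq_sum', norm_sq_eq_sum', ← Finset.sum_add_distrib]
    apply Finset.sum_le_sum
    intro k _
    have hadd : (Q s + g (x (s : ℤ))) k = Q s k + g (x (s : ℤ)) k := rfl
    rw [hadd, hQrec s k]
    rcases max_cases (-(g (x (s : ℤ)) k)) (Q s k + g (x (s : ℤ)) k) with ⟨he, _⟩ | ⟨he, _⟩ <;>
      rw [he] <;>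
      nlinarith [sq_nonneg (Q s k + g (x (s : ℤ)) k), sq_nonneg (g (x (s : ℤ)) k)]
  -- per-iteration inequality
  have hiter : ∀ τ : ℕ,
      f (x (τ : ℤ)) + ‖Q (τ + 1)‖ ^ 2 / 2 - ‖Q τ‖ ^ 2 / 2
        ≤ f xs + α * ‖xs - x ((τ : ℤ) - 1)‖ ^ 2 - α * ‖xs - x (τ : ℤ)‖ ^ 2
          + ‖g (x (τ : ℤ))‖ ^ 2 / 2 - ‖g (x ((τ : ℤ) - 1))‖ ^ 2 / 2 := by
    intro τ
    have hw : ∀ k, 0 ≤ (Q τ + g (x ((τ : ℤ) - 1))) k := hwnn τ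
    have hconvinner : ConvexOn ℝ X (fun y => ⟪Q τ + g (x ((τ : ℤ) - 1)), g y⟫) := by
      have he : (fun y => ⟪Q τ + g (x ((τ : ℤ) - 1)), g y⟫)
          = fun y => ∑ k, (Q τ + g (x ((τ : ℤ) - 1))) k * g y k := by
        funext y; rw [inner_eq_sum']
      rw [he]
      apply convexOn_finset_sum' hXconv
      intro k _
      refine ⟨hXconv, fun u hu v hv a b ha hb hab => ?_⟩
      have h7 := (hg k).2 hu hv ha hb hab
      have hwk := hw k
      simp only [smul_eq_mul] at h7 ⊢
      nlinarith [mul_le_mul_of_nonneg_left h7 hwk]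
    have hconvh : ConvexOn ℝ X (fun y => f y + ⟪Q τ + g (x ((τ : ℤ) - 1)), g y⟫) :=
      hf.add hconvinner
    have hp := pushback (c := x ((τ : ℤ) - 1)) (z := xs)
      (h := fun y => f y + ⟪Q τ + g (x ((τ : ℤ) - 1)), g y⟫)
      hXconv hconvh hα0 (hxmem τ) hxs (fun y hy => hmin τ y hy)
    have hinnxs : ⟪Q τ + g (x ((τ : ℤ) - 1)), g xs⟫ ≤ 0 := by
      rw [inner_eq_sum']
      apply Finset.sum_nonpos
      intro k _
      exact mul_nonpos_iff.mpr (Or.inl ⟨hw k, hfeas k⟩)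
    have hsplit : ⟪Q τ + g (x ((τ : ℤ) - 1)), g (x (τ : ℤ))⟫
        = ⟪Q τ, g (x (τ : ℤ))⟫ + ⟪g (x ((τ : ℤ) - 1)), g (x (τ : ℤ))⟫ :=
      inner_add_left _ _ _
    have hns : ‖g (x (τ : ℤ)) - g (x ((τ : ℤ) - 1))‖ ^ 2
        = ‖g (x (τ : ℤ))‖ ^ 2 - 2 * ⟪g (x (τ : ℤ)), g (x ((τ : ℤ) - 1))⟫
          + ‖g (x ((τ : ℤ) - 1))‖ ^ 2 := norm_sub_sq_real _ _
    have hcomm : ⟪g (x (τ : ℤ)), g (x ((τ : ℤ) - 1))⟫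
        = ⟪g (x ((τ : ℤ) - 1)), g (x (τ : ℤ))⟫ := real_inner_comm _ _
    have hlip1 : ‖g (x (τ : ℤ)) - g (x ((τ : ℤ) - 1))‖
        ≤ β * ‖x (τ : ℤ) - x ((τ : ℤ) - 1)‖ := hLip _ (hxmem τ) _ (hmem' τ)
    have hlip2 : ‖g (x (τ : ℤ)) - g (x ((τ : ℤ) - 1))‖ ^ 2
        ≤ 2 * α * ‖x (τ : ℤ) - x ((τ : ℤ) - 1)‖ ^ 2 := by
      have h8 : ‖g (x (τ : ℤ)) - g (x ((τ : ℤ) - 1))‖ ^ 2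
          ≤ (β * ‖x (τ : ℤ) - x ((τ : ℤ) - 1)‖) ^ 2 :=
        pow_le_pow_left₀ (norm_nonneg _) hlip1 2
      nlinarith [sq_nonneg ‖x (τ : ℤ) - x ((τ : ℤ) - 1)‖]
    have hd := hdrift τ
    have hexp : ‖Q τ + g (x (τ : ℤ))‖ ^ 2
        = ‖Q τ‖ ^ 2 + 2 * ⟪Q τ, g (x (τ : ℤ))⟫ + ‖g (x (τ : ℤ))‖ ^ 2 :=
      norm_add_sq_real _ _
    linarith [hp, hinnxs, hd, hlip2, hsplit, hns, hcomm, hexp]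
  -- telescoping
  set A : ℕ → ℝ := fun τ =>
    ‖Q τ‖ ^ 2 / 2 + α * ‖xs - x ((τ : ℤ) - 1)‖ ^ 2 - ‖g (x ((τ : ℤ) - 1))‖ ^ 2 / 2 with hAdef
  have hiter' : ∀ τ : ℕ, f (x (τ : ℤ)) ≤ f xs + (A τ - A (τ + 1)) := by
    intro τ
    have h9 := hiter τ
    have hA1 : A (τ + 1)
        = ‖Q (τ + 1)‖ ^ 2 / 2 + α * ‖xs - x (τ : ℤ)‖ ^ 2 - ‖g (x (τ : ℤ))‖ ^ 2 / 2 := by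
      simp only [hAdef]
      rw [hcast τ]
    have hA0 : A τ
        = ‖Q τ‖ ^ 2 / 2 + α * ‖xs - x ((τ : ℤ) - 1)‖ ^ 2
          - ‖g (x ((τ : ℤ) - 1))‖ ^ 2 / 2 := by simp only [hAdef]
    rw [hA0, hA1] at *
    linarith [h9]
  have htel : ∑ τ ∈ Finset.range t, (A τ - A (τ + 1)) = A 0 - A t :=
    Finset.sum_range_sub' A t
  have hsum : ∑ τ ∈ Finset.range t, f (x (τ : ℤ)) ≤ t * f xs + (A 0 - A t) := by
    calc ∑ τ ∈ Finset.range t, f (x (τ : ℤ))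
        ≤ ∑ τ ∈ Finset.range t, (f xs + (A τ - A (τ + 1))) :=
          Finset.sum_le_sum fun τ _ => hiter' τ
      _ = t * f xs + (A 0 - A t) := by
          rw [Finset.sum_add_distrib, Finset.sum_const, Finset.card_range, htel,
            nsmul_eq_mul]
  have hA0le : A 0 ≤ α * ‖xs - x (-1)‖ ^ 2 := by
    have hQ0le : ‖Q 0‖ ^ 2 ≤ ‖g (x (-1))‖ ^ 2 := by
      rw [norm_sq_eq_sum', norm_sq_eq_sum']
      apply Finset.sum_le_sum
      intro k _
      rw [hQ0 k]
      rcases max_cases (0 : ℝ) (-(g (x (-1)) k)) with ⟨he, _⟩ | ⟨he, _⟩ <;> rw [he] <;>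
        nlinarith [sq_nonneg (g (x (-1)) k)]
    simp only [hAdef]
    rw [hcast0]
    linarith
  have hAtge : 0 ≤ A t := by
    obtain ⟨s, rfl⟩ : ∃ s, t = s + 1 := ⟨t - 1, by omega⟩
    have hQt : ‖g (x (s : ℤ))‖ ^ 2 ≤ ‖Q (s + 1)‖ ^ 2 := by
      rw [norm_sq_eq_sum', norm_sq_eq_sum']
      apply Finset.sum_le_sum
      intro k _
      have h10 := hQge s k
      nlinarith [abs_nonneg (g (x (s : ℤ)) k), sq_abs (g (x (s : ℤ)) k)]
    simp only [hAdef]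
    rw [hcast s]
    have h11 : 0 ≤ α * ‖xs - x (s : ℤ)‖ ^ 2 := by positivity
    linarith
  -- Jensen and conclusion
  have htpos : (0 : ℝ) < t := by
    have : 0 < t := ht
    exact_mod_cast this
  have htne : (t : ℝ) ≠ 0 := ne_of_gt htpos
  have hwsum : ∑ _τ ∈ Finset.range t, (t : ℝ)⁻¹ = 1 := by
    rw [Finset.sum_const, Finset.card_range, nsmul_eq_mul]
    field_simp
  have hjensen : f ((t : ℝ)⁻¹ • ∑ τ ∈ Finset.range t, x (τ : ℤ))
      ≤ ∑ τ ∈ Finset.range t, (t : ℝ)⁻¹ * f (x (τ : ℤ)) := by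
    rw [Finset.smul_sum]
    have := hf.map_sum_le (w := fun _ : ℕ => (t : ℝ)⁻¹) (p := fun τ : ℕ => x (τ : ℤ))
      (t := Finset.range t) (fun i _ => by positivity) hwsum (fun i _ => hxmem i)
    simpa [smul_eq_mul] using this
  have hfin : ∑ τ ∈ Finset.range t, (t : ℝ)⁻¹ * f (x (τ : ℤ))
      ≤ f xs + α / t * ‖xs - x (-1)‖ ^ 2 := by
    rw [← Finset.mul_sum]
    have h11 : ∑ τ ∈ Finset.range t, f (x (τ : ℤ))
        ≤ t * f xs + α * ‖xs - x (-1)‖ ^ 2 := by linarith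
    have h12 := mul_le_mul_of_nonneg_left h11 (le_of_lt (inv_pos.2 htpos))
    have h13 : (t : ℝ)⁻¹ * ((t : ℝ) * f xs + α * ‖xs - x (-1)‖ ^ 2)
        = f xs + α / (t : ℝ) * ‖xs - x (-1)‖ ^ 2 := by
      field_simp
    linarith
  exact le_trans hjensen hfin
end

section
/- Consider Algorithm 1 applied to the convex program min{f(x) : g_k(x) ≤ 0 ∀k ∈ {1,…,m}, x ∈ 𝒳} with parameter α > β²/2, where β is the Lipschitz modulus of g on 𝒳. Let x* ∈ 𝒳 be an optimal solution and suppose λ* ∈ ℝᵐ is a Lagrange multiplier vector attaining strong duality (λ*_k ≥ 0 for all k and f(x*) ≤ f(x) + ∑_k λ*_k g_k(x) for all x ∈ 𝒳). Then for all t ≥ 1 and all k ∈ {1,…,m}, the running average x̄(t) = (1/t)∑_{τ=0}^{t−1} x(τ) satisfies g_k(x̄(t)) ≤ (1/t)·( 2‖λ*‖ + √(2α)·‖x* − x(−1)‖ + √(α/(α − β²/2))·‖g(x*)‖ ). -/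
open scoped RealInnerProductSpace

lemma alg1_inner_sum {m : ℕ} (v w : EuclideanSpace ℝ (Fin m)) :
    ⟪v, w⟫ = ∑ k, v k * w k := by
  simp [PiLp.inner_apply, RCLike.inner_apply, mul_comm]

lemma alg1_norm_sq {m : ℕ} (v : EuclideanSpace ℝ (Fin m)) :
    ‖v‖ ^ 2 = ∑ k, (v k) ^ 2 := by
  rw [← real_inner_self_eq_norm_sq, alg1_inner_sum]
  simp [sq]

lemma alg1_coord_le_norm {m : ℕ} (v : EuclideanSpace ℝ (Fin m)) (k : Fin m) :
    v k ≤ ‖v‖ := by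
  have h1 : (v k) ^ 2 ≤ ‖v‖ ^ 2 := by
    rw [alg1_norm_sq]
    exact Finset.single_le_sum (fun i _ => sq_nonneg (v i)) (Finset.mem_univ k)
  nlinarith [norm_nonneg v]

lemma alg1_combo {n : ℕ} (a b c : EuclideanSpace ℝ (Fin n)) (θ : ℝ) :
    ‖((1 - θ) • a + θ • b) - c‖ ^ 2 =
      (1 - θ) * ‖a - c‖ ^ 2 + θ * ‖b - c‖ ^ 2 - θ * (1 - θ) * ‖a - b‖ ^ 2 := by
  simp only [alg1_norm_sq, Finset.mul_sum, ← Finset.sum_add_distrib, ← Finset.sum_sub_distrib]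
  apply Finset.sum_congr rfl
  intro k _
  simp only [PiLp.add_apply, PiLp.sub_apply, PiLp.smul_apply, smul_eq_mul]
  ring

set_option maxHeartbeats 1000000 in
theorem alg1_constraint_violation
    {n m : ℕ}
    (X : Set (EuclideanSpace ℝ (Fin n))) (hXconv : Convex ℝ X) (hXcl : IsClosed X)
    (f : EuclideanSpace ℝ (Fin n) → ℝ) (hf : ConvexOn ℝ X f) (hfc : ContinuousOn f X)
    (g : EuclideanSpace ℝ (Fin n) → EuclideanSpace ℝ (Fin m))
    (hg : ∀ k : Fin m, ConvexOn ℝ X (fun z => g z k))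
    (β : ℝ) (hLip : ∀ u ∈ X, ∀ v ∈ X, ‖g u - g v‖ ≤ β * ‖u - v‖)
    (α : ℝ) (hα : β ^ 2 / 2 < α)
    (x : ℤ → EuclideanSpace ℝ (Fin n)) (hxm1 : x (-1) ∈ X)
    (Q : ℕ → EuclideanSpace ℝ (Fin m))
    (hQ0 : ∀ k : Fin m, Q 0 k = max 0 (-(g (x (-1)) k)))
    (hxmem : ∀ t : ℕ, x t ∈ X)
    (hmin : ∀ t : ℕ, ∀ z ∈ X,
      f (x t) + ⟪Q t + g (x ((t : ℤ) - 1)), g (x t)⟫ + α * ‖x t - x ((t : ℤ) - 1)‖ ^ 2 ≤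
        f z + ⟪Q t + g (x ((t : ℤ) - 1)), g z⟫ + α * ‖z - x ((t : ℤ) - 1)‖ ^ 2)
    (hQrec : ∀ (t : ℕ) (k : Fin m),
      Q (t + 1) k = max (-(g (x t) k)) (Q t k + g (x t) k))
    (xs : EuclideanSpace ℝ (Fin n)) (hxs : xs ∈ X)
    (hfeas : ∀ k : Fin m, g xs k ≤ 0)
    (hopt : ∀ z ∈ X, (∀ k : Fin m, g z k ≤ 0) → f xs ≤ f z)
    (lam : EuclideanSpace ℝ (Fin m)) (hlam : ∀ k : Fin m, 0 ≤ lam k)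
    (hsd : ∀ z ∈ X, f xs ≤ f z + ∑ k : Fin m, lam k * g z k)
    :
    ∀ t : ℕ, 1 ≤ t → ∀ k : Fin m, g ((t : ℝ)⁻¹ • ∑ τ ∈ Finset.range t, x τ) k ≤ (1 / t) * (2 * ‖lam‖ + Real.sqrt (2 * α) * ‖xs - x (-1)‖ + Real.sqrt (α / (α - β ^ 2 / 2)) * ‖g xs‖) := by
  have hβ2 : (0:ℝ) ≤ β ^ 2 / 2 := by positivity
  have hαpos : 0 < α := lt_of_le_of_lt hβ2 hα
  have hspos : (0:ℝ) < α - β ^ 2 / 2 := by linarith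
  -- previous iterate membership
  have hxprev : ∀ t : ℕ, x ((t : ℤ) - 1) ∈ X := by
    intro t
    cases t with
    | zero => simpa using hxm1
    | succ τ =>
        have hc : ((τ + 1 : ℕ) : ℤ) - 1 = (τ : ℤ) := by push_cast; ring
        rw [hc]; exact hxmem τ
  -- Q nonneg
  have hQnn : ∀ t : ℕ, ∀ k, 0 ≤ Q t k := by
    intro t
    induction t with
    | zero => intro k; rw [hQ0]; exact le_max_left _ _
    | succ τ ih =>
        intro k
        rw [hQrec]
        rcases le_total (g (x τ) k) 0 with h | h
        · exact le_max_of_le_left (by linarith)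
        · exact le_max_of_le_right (by have := ih k; linarith)
  -- Q t + g(x(t-1)) nonneg
  have hvnn : ∀ t : ℕ, ∀ k, 0 ≤ Q t k + g (x ((t : ℤ) - 1)) k := by
    intro t k
    cases t with
    | zero =>
        have h0 : ((0 : ℕ) : ℤ) - 1 = -1 := by norm_num
        rw [h0, hQ0]
        have := le_max_right (0:ℝ) (-(g (x (-1)) k)); linarith
    | succ τ =>
        have hc : ((τ + 1 : ℕ) : ℤ) - 1 = (τ : ℤ) := by push_cast; ring
        rw [hc, hQrec]
        have := le_max_left (-(g (x τ) k)) (Q τ k + g (x τ) k); linarith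
  -- partial sums bounded by Q
  have hQsum : ∀ t : ℕ, ∀ k, (∑ τ ∈ Finset.range t, g (x τ) k) ≤ Q t k := by
    intro t
    induction t with
    | zero => intro k; simpa using hQnn 0 k
    | succ τ ih =>
        intro k
        rw [Finset.sum_range_succ, hQrec]
        have h1 := ih k
        have h2 := le_max_right (-(g (x τ) k)) (Q τ k + g (x τ) k)
        linarith
  -- drift bound
  have hdrift : ∀ τ : ℕ, ‖Q (τ+1)‖^2 ≤ ‖Q τ‖^2 + 2*⟪Q τ, g (x τ)⟫ + 2*‖g (x τ)‖^2 := by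
    intro τ
    simp only [alg1_norm_sq, alg1_inner_sum, Finset.mul_sum, ← Finset.sum_add_distrib]
    apply Finset.sum_le_sum
    intro k _
    rw [hQrec]
    rcases le_total (-(g (x τ) k)) (Q τ k + g (x τ) k) with h | h
    · rw [max_eq_right h]; nlinarith [sq_nonneg (g (x τ) k)]
    · rw [max_eq_left h]; nlinarith [sq_nonneg (Q τ k + g (x τ) k)]
  -- strong convexity pushed inequality
  have hsc : ∀ t : ℕ,
      f (x t) + ⟪Q t + g (x ((t : ℤ) - 1)), g (x t)⟫ + α * ‖x t - x ((t : ℤ) - 1)‖ ^ 2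
        + α * ‖xs - x t‖ ^ 2 ≤
      f xs + ⟪Q t + g (x ((t : ℤ) - 1)), g xs⟫ + α * ‖xs - x ((t : ℤ) - 1)‖ ^ 2 := by
    intro t
    apply le_of_forall_pos_le_add
    intro ε hε
    set W : ℝ := ‖xs - x t‖ ^ 2 with hW
    set θ : ℝ := min (1/2) (ε / (α * W + 1)) with hθdef
    have hden : 0 < α * W + 1 := by nlinarith
    have hθpos : 0 < θ := lt_min (by norm_num) (div_pos hε hden)
    have hθlt : θ < 1 := lt_of_le_of_lt (min_le_left _ _) (by norm_num)
    have hθ1 : 0 ≤ 1 - θ := by linarith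
    set z : EuclideanSpace ℝ (Fin n) := (1 - θ) • x t + θ • xs with hz
    have hzX : z ∈ X := hXconv (hxmem t) hxs hθ1 (le_of_lt hθpos) (by ring)
    have hmin' := hmin t z hzX
    have hfz : f z ≤ (1 - θ) * f (x t) + θ * f xs := by
      have := hf.2 (hxmem t) hxs hθ1 (le_of_lt hθpos) (by ring)
      simpa [smul_eq_mul, hz] using this
    have hgz : ⟪Q t + g (x ((t : ℤ) - 1)), g z⟫ ≤
        (1 - θ) * ⟪Q t + g (x ((t : ℤ) - 1)), g (x t)⟫ + θ * ⟪Q t + g (x ((t : ℤ) - 1)), g xs⟫ := by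
      simp only [alg1_inner_sum, Finset.mul_sum, ← Finset.sum_add_distrib]
      apply Finset.sum_le_sum
      intro k _
      have hvk : 0 ≤ (Q t + g (x ((t : ℤ) - 1))) k := by
        have := hvnn t k; simpa [PiLp.add_apply] using this
      have hconv := (hg k).2 (hxmem t) hxs hθ1 (le_of_lt hθpos) (by ring)
      simp only [smul_eq_mul] at hconv
      have h2 := mul_le_mul_of_nonneg_left hconv hvk
      nlinarith [h2]
    have hcombo : ‖z - x ((t : ℤ) - 1)‖ ^ 2 =
        (1 - θ) * ‖x t - x ((t : ℤ) - 1)‖ ^ 2 + θ * ‖xs - x ((t : ℤ) - 1)‖ ^ 2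
          - θ * (1 - θ) * ‖x t - xs‖ ^ 2 := alg1_combo _ _ _ _
    have hWW : ‖x t - xs‖ ^ 2 = W := by rw [hW, norm_sub_rev]
    rw [hWW] at hcombo
    -- from hmin', derive θ * LHS ≤ θ * (RHS - α (1-θ) W)
    have hstep : f (x t) + ⟪Q t + g (x ((t : ℤ) - 1)), g (x t)⟫ + α * ‖x t - x ((t : ℤ) - 1)‖ ^ 2
        + α * (1 - θ) * W ≤
        f xs + ⟪Q t + g (x ((t : ℤ) - 1)), g xs⟫ + α * ‖xs - x ((t : ℤ) - 1)‖ ^ 2 := by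
      rw [hcombo] at hmin'
      have hθmul : θ * (f (x t) + ⟪Q t + g (x ((t : ℤ) - 1)), g (x t)⟫
            + α * ‖x t - x ((t : ℤ) - 1)‖ ^ 2 + α * (1 - θ) * W) ≤
          θ * (f xs + ⟪Q t + g (x ((t : ℤ) - 1)), g xs⟫ + α * ‖xs - x ((t : ℤ) - 1)‖ ^ 2) := by
        nlinarith [hmin', hfz, hgz]
      exact le_of_mul_le_mul_left hθmul hθpos
    have hθsmall : α * θ * W ≤ ε := by
      have h1 : θ ≤ ε / (α * W + 1) := min_le_right _ _
      have h3 : θ * (α * W + 1) ≤ ε := by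
        rw [← le_div_iff₀ hden]; exact h1
      nlinarith [hθpos]
    linarith
  -- key per-step inequality
  have hkey : ∀ τ : ℕ,
      f (x τ) + (‖Q (τ+1)‖^2/2 + α * ‖xs - x τ‖^2 - ‖g (x τ)‖^2/2) ≤
      f xs + (‖Q τ‖^2/2 + α * ‖xs - x ((τ : ℤ) - 1)‖^2 - ‖g (x ((τ : ℤ) - 1))‖^2/2) := by
    intro τ
    have E1 := hsc τ
    have E2 := hdrift τ
    have E3 : ‖g (x τ) - g (x ((τ : ℤ) - 1))‖^2
        = ‖g (x τ)‖^2 - 2*⟪g (x τ), g (x ((τ : ℤ) - 1))⟫ + ‖g (x ((τ : ℤ) - 1))‖^2 :=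
      norm_sub_sq_real _ _
    have E4 : ‖g (x τ) - g (x ((τ : ℤ) - 1))‖^2 ≤ 2 * α * ‖x τ - x ((τ : ℤ) - 1)‖^2 := by
      have h1 := hLip (x τ) (hxmem τ) (x ((τ : ℤ) - 1)) (hxprev τ)
      have h2 : ‖g (x τ) - g (x ((τ : ℤ) - 1))‖^2 ≤ (β * ‖x τ - x ((τ : ℤ) - 1)‖)^2 := by
        have := norm_nonneg (g (x τ) - g (x ((τ : ℤ) - 1)))
        nlinarith
      have h3 : (β * ‖x τ - x ((τ : ℤ) - 1)‖)^2 = β^2 * ‖x τ - x ((τ : ℤ) - 1)‖^2 := by ring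
      nlinarith [sq_nonneg (‖x τ - x ((τ : ℤ) - 1)‖)]
    have E5 : ⟪Q τ + g (x ((τ : ℤ) - 1)), g (x τ)⟫
        = ⟪Q τ, g (x τ)⟫ + ⟪g (x ((τ : ℤ) - 1)), g (x τ)⟫ := inner_add_left _ _ _
    have E6 : ⟪Q τ + g (x ((τ : ℤ) - 1)), g xs⟫ ≤ 0 := by
      rw [alg1_inner_sum]
      apply Finset.sum_nonpos
      intro k _
      have hvk : 0 ≤ (Q τ + g (x ((τ : ℤ) - 1))) k := by
        have := hvnn τ k; simpa [PiLp.add_apply] using this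
      exact mul_nonpos_of_nonneg_of_nonpos hvk (hfeas k)
    have E7 : ⟪g (x τ), g (x ((τ : ℤ) - 1))⟫ = ⟪g (x ((τ : ℤ) - 1)), g (x τ)⟫ :=
      real_inner_comm _ _
    linarith
  -- telescoping
  have tele : ∀ t : ℕ,
      (∑ τ ∈ Finset.range t, f (x τ)) +
        (‖Q t‖^2/2 + α * ‖xs - x ((t : ℤ) - 1)‖^2 - ‖g (x ((t : ℤ) - 1))‖^2/2) ≤
      (t : ℝ) * f xs +
        (‖Q 0‖^2/2 + α * ‖xs - x (-1)‖^2 - ‖g (x (-1))‖^2/2) := by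
    intro t
    induction t with
    | zero => norm_num
    | succ τ ih =>
        rw [Finset.sum_range_succ]
        have hc : ((τ + 1 : ℕ) : ℤ) - 1 = (τ : ℤ) := by push_cast; ring
        rw [hc]
        have hk := hkey τ
        push_cast
        linarith
  -- final bound on ‖Q t‖, then conclusion
  intro t ht k
  have htpos : (0:ℝ) < t := by exact_mod_cast ht
  -- lower bound from strong duality
  have hlow : (t : ℝ) * f xs ≤ (∑ τ ∈ Finset.range t, f (x τ)) + ‖lam‖ * ‖Q t‖ := by
    have h1 : (t : ℝ) * f xs = ∑ τ ∈ Finset.range t, f xs := by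
      rw [Finset.sum_const, Finset.card_range, nsmul_eq_mul]
    have h2 : ∑ τ ∈ Finset.range t, f xs ≤
        ∑ τ ∈ Finset.range t, (f (x τ) + ∑ j : Fin m, lam j * g (x τ) j) :=
      Finset.sum_le_sum (fun τ _ => hsd _ (hxmem τ))
    have h3 : ∑ τ ∈ Finset.range t, (f (x τ) + ∑ j : Fin m, lam j * g (x τ) j)
        = (∑ τ ∈ Finset.range t, f (x τ)) + ∑ j : Fin m, lam j * (∑ τ ∈ Finset.range t, g (x τ) j) := by
      rw [Finset.sum_add_distrib, Finset.sum_comm]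
      simp [Finset.mul_sum]
    have h4 : ∑ j : Fin m, lam j * (∑ τ ∈ Finset.range t, g (x τ) j) ≤ ∑ j : Fin m, lam j * Q t j :=
      Finset.sum_le_sum (fun j _ => mul_le_mul_of_nonneg_left (hQsum t j) (hlam j))
    have h5 : ∑ j : Fin m, lam j * Q t j = ⟪lam, Q t⟫ := (alg1_inner_sum lam (Q t)).symm
    have h6 : ⟪lam, Q t⟫ ≤ ‖lam‖ * ‖Q t‖ := real_inner_le_norm lam (Q t)
    rw [h1]
    refine h2.trans ?_
    rw [h3]
    linarith [h4, h6, h5]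
  -- D0 bound
  have hD0 : ‖Q 0‖^2 ≤ ‖g (x (-1))‖^2 := by
    simp only [alg1_norm_sq]
    apply Finset.sum_le_sum
    intro j _
    rw [hQ0]
    rcases le_total (g (x (-1)) j) 0 with h | h
    · rw [max_eq_right (by linarith)]; nlinarith
    · rw [max_eq_left (by linarith)]; nlinarith
  -- tail bound
  have htail : ‖g (x ((t : ℤ) - 1))‖^2/2 - α * ‖xs - x ((t : ℤ) - 1)‖^2
      ≤ (α / (α - β^2/2)) * ‖g xs‖^2 / 2 := by
    set r : ℝ := ‖xs - x ((t : ℤ) - 1)‖ with hr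
    set a : ℝ := ‖g xs‖ with ha
    have hlip := hLip (x ((t : ℤ) - 1)) (hxprev t) xs hxs
    have hrev : ‖x ((t : ℤ) - 1) - xs‖ = r := by rw [hr, norm_sub_rev]
    rw [hrev] at hlip
    have hb : ‖g (x ((t : ℤ) - 1))‖ ≤ a + β * r := by
      have h1 := norm_sub_norm_le (g (x ((t : ℤ) - 1))) (g xs)
      linarith
    have hb2 : ‖g (x ((t : ℤ) - 1))‖^2 ≤ (a + β * r)^2 := by
      nlinarith [norm_nonneg (g (x ((t : ℤ) - 1)))]
    have hgoal : (a + β * r)^2/2 - α * r^2 ≤ (α / (α - β^2/2)) * a^2 / 2 := by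
      have h2s : (0:ℝ) < 2 * (α - β^2/2) := by linarith
      have heq : (α / (α - β^2/2)) * a^2 / 2 = α * a^2 / (2 * (α - β^2/2)) := by
        rw [div_mul_eq_mul_div, div_div, mul_comm (α - β^2/2) 2]
      rw [heq, le_div_iff₀ h2s]
      nlinarith [sq_nonneg ((α - β^2/2) * r - (β/2) * a)]
    linarith
  -- main quadratic inequality
  have hmain : ‖Q t‖^2/2 ≤ ‖lam‖ * ‖Q t‖ + α * ‖xs - x (-1)‖^2 + (α / (α - β^2/2)) * ‖g xs‖^2/2 := by
    have h1 := tele t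
    linarith [htail, hD0, hlow]
  -- resolve quadratic
  have hR : ‖Q t‖ ≤ 2 * ‖lam‖ + Real.sqrt (2 * α) * ‖xs - x (-1)‖ + Real.sqrt (α / (α - β^2/2)) * ‖g xs‖ := by
    set qn := ‖Q t‖ with hqn
    set L := ‖lam‖ with hL
    set u := Real.sqrt (2 * α) * ‖xs - x (-1)‖ with hu
    set w := Real.sqrt (α / (α - β^2/2)) * ‖g xs‖ with hw
    have hu2 : u^2 = 2 * α * ‖xs - x (-1)‖^2 := by
      rw [hu, mul_pow, Real.sq_sqrt (by positivity)]
    have hw2 : w^2 = (α / (α - β^2/2)) * ‖g xs‖^2 := by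
      rw [hw, mul_pow, Real.sq_sqrt (by positivity)]
    have hunn : 0 ≤ u := mul_nonneg (Real.sqrt_nonneg _) (norm_nonneg _)
    have hwnn : 0 ≤ w := mul_nonneg (Real.sqrt_nonneg _) (norm_nonneg _)
    have hLnn : 0 ≤ L := norm_nonneg _
    have hqnn : 0 ≤ qn := norm_nonneg _
    have hq2 : qn^2 ≤ 2 * L * qn + u^2 + w^2 := by
      rw [hu2, hw2]; linarith [hmain]
    nlinarith [sq_nonneg (qn - L - u - w), sq_nonneg (u - w), mul_nonneg hunn hwnn,
      mul_nonneg hLnn hunn, mul_nonneg hLnn hwnn, mul_nonneg hqnn hunn, mul_nonneg hqnn hwnn,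
      mul_nonneg hLnn hqnn]
  -- Jensen + conclusion
  have hjensen : g ((t : ℝ)⁻¹ • ∑ τ ∈ Finset.range t, x τ) k ≤
      ∑ τ ∈ Finset.range t, (t : ℝ)⁻¹ * g (x τ) k := by
    have hsum1 : ∑ τ ∈ Finset.range t, (t : ℝ)⁻¹ = 1 := by
      rw [Finset.sum_const, Finset.card_range, nsmul_eq_mul]
      field_simp
    have hmem : ∀ τ ∈ Finset.range t, x τ ∈ X := fun τ _ => hxmem τ
    have := (hg k).map_sum_le (fun τ _ => by positivity) hsum1 hmem
    rw [Finset.smul_sum]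
    exact this
  have hsum2 : ∑ τ ∈ Finset.range t, (t : ℝ)⁻¹ * g (x τ) k
      = (t : ℝ)⁻¹ * ∑ τ ∈ Finset.range t, g (x τ) k := by rw [Finset.mul_sum]
  have h7 : (t : ℝ)⁻¹ * ∑ τ ∈ Finset.range t, g (x τ) k ≤ (t : ℝ)⁻¹ * ‖Q t‖ := by
    apply mul_le_mul_of_nonneg_left _ (by positivity)
    exact le_trans (hQsum t k) (alg1_coord_le_norm _ k)
  have h8 : (t : ℝ)⁻¹ * ‖Q t‖ ≤ (1 / t) *
      (2 * ‖lam‖ + Real.sqrt (2 * α) * ‖xs - x (-1)‖ + Real.sqrt (α / (α - β^2/2)) * ‖g xs‖) := by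
    rw [one_div]
    exact mul_le_mul_of_nonneg_left hR (by positivity)
  linarith
end
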